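/- arXiv:2202.00437 — 2 statements merged into one kernel-verified Lean document; each statement's English description precedes it below -/
import Mathlib

section
/- Let β=(β_n)_{n∈ℕ} be a Cantor base with x_β<+∞. If the quasi-lazy β-expansion of x_β−1 is finite of length n∈ℕ (i.e., ℓ*_β(x_β−1)=ℓ_0⋯ℓ_{n−1}0^ω with ℓ_{n−1}≠0 if n≥1), then x_{β^(n)}=1. -/
open Filter Topology

/-- A Cantor real base: a sequence of reals `> 1` whose infinite product diverges to `+∞`. -/
structure IsCantorBase (β : ℕ → ℝ) : Prop where
  one_lt : ∀ n, 1 < β n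
  prod_tendsto : Tendsto (fun N => ∏ i ∈ Finset.range N, β i) atTop atTop

/-- The product `β_0 ⋯ β_n`. -/
noncomputable def prodUpTo (β : ℕ → ℝ) (n : ℕ) : ℝ := ∏ i ∈ Finset.range (n + 1), β i

/-- The shifted base `β^(n) = (β_n, β_{n+1}, …)`. -/
def shiftBase (β : ℕ → ℝ) (n : ℕ) : ℕ → ℝ := fun m => β (n + m)

/-- `x_β = Σ_{n} (⌈β_n⌉ - 1)/(β_0 ⋯ β_n)`. -/
noncomputable def xB (β : ℕ → ℝ) : ℝ := ∑' n, ((⌈β n⌉ : ℝ) - 1) / prodUpTo β n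

/-- The condition `x_β < +∞`, i.e. the series defining `x_β` converges. -/
def XBSummable (β : ℕ → ℝ) : Prop :=
  Summable (fun n => ((⌈β n⌉ : ℝ) - 1) / prodUpTo β n)

/-- `val_β(a) = Σ_n a_n/(β_0 ⋯ β_n)`. -/
noncomputable def valB (β : ℕ → ℝ) (a : ℕ → ℤ) : ℝ := ∑' n, (a n : ℝ) / prodUpTo β n

/-- The digit condition `a_n ∈ [[0, ⌈β_n⌉ - 1]]` for all `n`. -/
def validWord (β : ℕ → ℝ) (a : ℕ → ℤ) : Prop := ∀ n, 0 ≤ a n ∧ a n ≤ ⌈β n⌉ - 1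

/-- The flip map `θ_β`. -/
noncomputable def theta (β : ℕ → ℝ) (a : ℕ → ℤ) : ℕ → ℤ := fun n => ⌈β n⌉ - 1 - a n

/-- The greedy remainders `r_{β,n}(x)`. -/
noncomputable def greedyR (β : ℕ → ℝ) (x : ℝ) : ℕ → ℝ
  | 0 => β 0 * x - (⌊β 0 * x⌋ : ℝ)
  | n + 1 => β (n + 1) * greedyR β x n - (⌊β (n + 1) * greedyR β x n⌋ : ℝ)

/-- The greedy digits `ε_{β,n}(x)`; `greedyDigit β x` is the greedy β-expansion `d_β(x)`. -/
noncomputable def greedyDigit (β : ℕ → ℝ) (x : ℝ) : ℕ → ℤ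
  | 0 => ⌊β 0 * x⌋
  | n + 1 => ⌊β (n + 1) * greedyR β x n⌋

/-- The lazy remainders `s_{β,n}(x)`. -/
noncomputable def lazyS (β : ℕ → ℝ) (x : ℝ) : ℕ → ℝ
  | 0 => β 0 * x - (⌈β 0 * x - xB (shiftBase β 1)⌉ : ℝ)
  | n + 1 => β (n + 1) * lazyS β x n -
      (⌈β (n + 1) * lazyS β x n - xB (shiftBase β (n + 2))⌉ : ℝ)

/-- The lazy digits `ξ_{β,n}(x)`; `lazyDigit β x` is the lazy β-expansion `ℓ_β(x)`. -/
noncomputable def lazyDigit (β : ℕ → ℝ) (x : ℝ) : ℕ → ℤ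
  | 0 => ⌈β 0 * x - xB (shiftBase β 1)⌉
  | n + 1 => ⌈β (n + 1) * lazyS β x n - xB (shiftBase β (n + 2))⌉

/-- Strict lexicographic order on infinite words. -/
def lexLt (a b : ℕ → ℤ) : Prop := ∃ k, (∀ i < k, a i = b i) ∧ a k < b k

/-- Lexicographic order on infinite words. -/
def lexLe (a b : ℕ → ℤ) : Prop := lexLt a b ∨ a = b

/-- `D_β`, the set of greedy β-expansions of points of `[0,1)`. -/
def greedySet (β : ℕ → ℝ) : Set (ℕ → ℤ) :=
  {a | ∃ x ∈ Set.Ico (0 : ℝ) 1, a = greedyDigit β x}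

/-- `D'_β`, the set of lazy β-expansions of points of `(x_β - 1, x_β]`. -/
def lazySet (β : ℕ → ℝ) : Set (ℕ → ℤ) :=
  {a | ∃ x ∈ Set.Ioc (xB β - 1) (xB β), a = lazyDigit β x}

/-- `Δ'_β = ⋃_n D'_{β^(n)}`. -/
def deltaSet (β : ℕ → ℝ) : Set (ℕ → ℤ) := ⋃ n, lazySet (shiftBase β n)

-- aux lemmas
lemma shift_zero (β : ℕ → ℝ) : shiftBase β 0 = β := by
  funext m; simp [shiftBase]

lemma prodShift_pos (β : ℕ → ℝ) (hβ : IsCantorBase β) (n k : ℕ) :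
    0 < prodUpTo (shiftBase β n) k := by
  unfold prodUpTo
  exact Finset.prod_pos fun i _ => lt_trans one_pos (hβ.one_lt _)

lemma rangeProd_pos (β : ℕ → ℝ) (hβ : IsCantorBase β) (n j : ℕ) :
    0 < ∏ i ∈ Finset.range j, β (n + i) :=
  Finset.prod_pos fun i _ => lt_trans one_pos (hβ.one_lt _)

lemma shift_prod (β : ℕ → ℝ) (n k : ℕ) :
    prodUpTo β (n + k) = (∏ i ∈ Finset.range n, β i) * prodUpTo (shiftBase β n) k := by
  unfold prodUpTo shiftBase
  rw [show n + k + 1 = n + (k + 1) by omega, Finset.prod_range_add]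

lemma shift_summable (β : ℕ → ℝ) (hβ : IsCantorBase β) (hx : XBSummable β) (n : ℕ) :
    XBSummable (shiftBase β n) := by
  have hC : 0 < ∏ i ∈ Finset.range n, β i :=
    Finset.prod_pos fun i _ => lt_trans one_pos (hβ.one_lt _)
  have hx' : Summable (fun m => ((⌈β m⌉ : ℝ) - 1) / prodUpTo β m) := hx
  have h1 : Summable (fun k => ((⌈β (k + n)⌉ : ℝ) - 1) / prodUpTo β (k + n)) :=
    (summable_nat_add_iff (f := fun m => ((⌈β m⌉ : ℝ) - 1) / prodUpTo β m) n).mpr hx'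
  have h2 := h1.mul_left (∏ i ∈ Finset.range n, β i)
  refine h2.congr fun k => ?_
  have hQ : 0 < prodUpTo (shiftBase β n) k := prodShift_pos β hβ n k
  show _ * (((⌈β (k + n)⌉ : ℝ) - 1) / prodUpTo β (k + n)) = ((⌈β (n + k)⌉ : ℝ) - 1) / prodUpTo (shiftBase β n) k
  rw [Nat.add_comm k n, shift_prod β n k]
  field_simp


lemma xB_rec (β : ℕ → ℝ) (hβ : IsCantorBase β) (hx : XBSummable β) (m : ℕ) :
    β m * xB (shiftBase β m) = ((⌈β m⌉ : ℝ) - 1) + xB (shiftBase β (m + 1)) := by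
  have hs : Summable (fun k => ((⌈shiftBase β m k⌉ : ℝ) - 1) / prodUpTo (shiftBase β m) k) :=
    shift_summable β hβ hx m
  have hβm : (0:ℝ) < β m := lt_trans one_pos (hβ.one_lt m)
  have hp : ∀ k, prodUpTo (shiftBase β m) (k + 1) = β m * prodUpTo (shiftBase β (m + 1)) k := by
    intro k
    unfold prodUpTo shiftBase
    rw [Finset.prod_range_succ']
    have hi : ∀ i, β (m + (i + 1)) = β (m + 1 + i) := fun i => by
      rw [show m + (i + 1) = m + 1 + i by omega]
    simp only [hi, Nat.add_zero]
    exact mul_comm _ _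
  have h0 : xB (shiftBase β m)
      = ((⌈shiftBase β m 0⌉ : ℝ) - 1) / prodUpTo (shiftBase β m) 0
        + ∑' k, ((⌈shiftBase β m (k + 1)⌉ : ℝ) - 1) / prodUpTo (shiftBase β m) (k + 1) := by
    unfold xB
    exact Summable.tsum_eq_zero_add hs
  have hP0 : prodUpTo (shiftBase β m) 0 = β m := by
    unfold prodUpTo; simp [shiftBase]
  have h2 : ∑' k, ((⌈shiftBase β m (k + 1)⌉ : ℝ) - 1) / prodUpTo (shiftBase β m) (k + 1)
      = (β m)⁻¹ * xB (shiftBase β (m + 1)) := by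
    unfold xB
    rw [← tsum_mul_left]
    apply tsum_congr
    intro k
    rw [hp k]
    have hQ : prodUpTo (shiftBase β (m + 1)) k ≠ 0 := ne_of_gt (prodShift_pos β hβ (m + 1) k)
    have hidx : (⌈shiftBase β m (k + 1)⌉ : ℝ) = (⌈shiftBase β (m + 1) k⌉ : ℝ) := by
      unfold shiftBase
      rw [show m + (k + 1) = m + 1 + k by omega]
    rw [hidx]
    field_simp
  rw [h0, h2, hP0]
  have hc : (⌈shiftBase β m 0⌉ : ℝ) = (⌈β m⌉ : ℝ) := by unfold shiftBase; norm_num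
  rw [hc]
  field_simp

lemma shiftProd_tendsto (β : ℕ → ℝ) (hβ : IsCantorBase β) (m : ℕ) :
    Tendsto (fun j => ∏ i ∈ Finset.range j, β (m + i)) atTop atTop := by
  have hC : 0 < ∏ i ∈ Finset.range m, β i :=
    Finset.prod_pos fun i _ => lt_trans one_pos (hβ.one_lt _)
  have h1 : Tendsto (fun j => (∏ i ∈ Finset.range (m + j), β i) / ∏ i ∈ Finset.range m, β i)
      atTop atTop := by
    apply Tendsto.atTop_div_const hC
    exact hβ.prod_tendsto.comp (by simpa [Nat.add_comm] using tendsto_add_atTop_nat m)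
  refine h1.congr fun j => ?_
  rw [Finset.prod_range_add, mul_div_cancel_left₀ _ (ne_of_gt hC)]

lemma xB_shift_nonneg (β : ℕ → ℝ) (hβ : IsCantorBase β) (m : ℕ) :
    0 ≤ xB (shiftBase β m) := by
  unfold xB
  apply tsum_nonneg
  intro k
  apply div_nonneg
  · have h1 : (1:ℝ) ≤ (⌈shiftBase β m k⌉ : ℝ) :=
      le_trans (hβ.one_lt _).le (Int.le_ceil _)
    linarith
  · exact (prodShift_pos β hβ m k).le

lemma xB_ge_one (β : ℕ → ℝ) (hβ : IsCantorBase β) (hx : XBSummable β) (m : ℕ) :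
    1 ≤ xB (shiftBase β m) := by
  by_contra h
  push_neg at h
  have hδ : 0 < 1 - xB (shiftBase β m) := by linarith
  have claim : ∀ j, (1 - xB (shiftBase β m)) * ∏ i ∈ Finset.range j, β (m + i)
      ≤ 1 - xB (shiftBase β (m + j)) := by
    intro j
    induction j with
    | zero => simp
    | succ j ih =>
      have hrec := xB_rec β hβ hx (m + j)
      have hce : β (m + j) ≤ (⌈β (m + j)⌉ : ℝ) := Int.le_ceil _
      have hb1 : (1:ℝ) < β (m + j) := hβ.one_lt _
      have hQ : 0 < ∏ i ∈ Finset.range j, β (m + i) := rangeProd_pos β hβ m j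
      rw [Finset.prod_range_succ]
      show (1 - xB (shiftBase β m)) * ((∏ i ∈ Finset.range j, β (m + i)) * β (m + j))
          ≤ 1 - xB (shiftBase β (m + j + 1))
      nlinarith [mul_le_mul_of_nonneg_left ih (le_of_lt (lt_trans one_pos hb1))]
  have htop : Tendsto (fun j => (1 - xB (shiftBase β m)) * ∏ i ∈ Finset.range j, β (m + i))
      atTop atTop := (shiftProd_tendsto β hβ m).const_mul_atTop hδ
  obtain ⟨j, hj⟩ := (htop.eventually_gt_atTop 1).exists
  have h0 : 0 ≤ xB (shiftBase β (m + j)) := xB_shift_nonneg β hβ (m + j)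
  linarith [claim j]

lemma lazyS_mem (β : ℕ → ℝ) (x : ℝ) (m : ℕ) :
    xB (shiftBase β (m + 1)) - 1 < lazyS β x m ∧ lazyS β x m ≤ xB (shiftBase β (m + 1)) := by
  cases m with
  | zero =>
    have h1 := Int.le_ceil (β 0 * x - xB (shiftBase β 1))
    have h2 := Int.ceil_lt_add_one (β 0 * x - xB (shiftBase β 1))
    constructor <;> simp only [lazyS] <;> linarith
  | succ k =>
    have h1 := Int.le_ceil (β (k + 1) * lazyS β x k - xB (shiftBase β (k + 2)))
    have h2 := Int.ceil_lt_add_one (β (k + 1) * lazyS β x k - xB (shiftBase β (k + 2)))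
    constructor <;> simp only [lazyS] <;> linarith

noncomputable def sStar (β : ℕ → ℝ) (ℓ : ℕ → ℤ) : ℕ → ℝ
  | 0 => β 0 * (xB β - 1) - (ℓ 0 : ℝ)
  | m + 1 => β (m + 1) * sStar β ℓ m - (ℓ (m + 1) : ℝ)
/-- if the quasi-lazy expansion of `x_β−1` is finite of length `n`,
then `x_{β^(n)} = 1`. -/
theorem quasiLazy_finite (β : ℕ → ℝ) (hβ : IsCantorBase β) (hx : XBSummable β)
    (ℓstar : ℕ → ℤ)
    (hl : Tendsto (lazyDigit β) (nhdsWithin (xB β - 1) (Set.Ioi (xB β - 1))) (nhds ℓstar))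
    (n : ℕ) (hzero : ∀ k, n ≤ k → ℓstar k = 0)
    (hlast : ∀ m, n = m + 1 → ℓstar m ≠ 0) :
    xB (shiftBase β n) = 1 := by
  set L := nhdsWithin (xB β - 1) (Set.Ioi (xB β - 1)) with hLdef
  haveI : L.NeBot := nhdsGT_neBot _
  -- eventual equality of digits
  have hev : ∀ k, ∀ᶠ x in L, lazyDigit β x k = ℓstar k := by
    intro k
    have h1 : Tendsto (fun x => lazyDigit β x k) L (nhds (ℓstar k)) :=
      (((continuous_apply k).tendsto ℓstar)).comp hl
    rwa [nhds_discrete, tendsto_pure] at h1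
  have hdig : ∀ k, Tendsto (fun x => ((lazyDigit β x k : ℤ) : ℝ)) L (nhds ((ℓstar k : ℝ))) := by
    intro k
    refine tendsto_const_nhds.congr' ?_
    filter_upwards [hev k] with x hx2
    rw [hx2]
  -- lazy remainders tend to sStar
  have hts : ∀ m, Tendsto (fun x => lazyS β x m) L (nhds (sStar β ℓstar m)) := by
    intro m
    induction m with
    | zero =>
      have h1 : Tendsto (fun x : ℝ => β 0 * x) L (nhds (β 0 * (xB β - 1))) :=
        ((continuous_const.mul continuous_id).tendsto (xB β - 1)).mono_left nhdsWithin_le_nhds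
      have h3 : Tendsto (fun x => β 0 * x - ((lazyDigit β x 0 : ℤ) : ℝ)) L
          (nhds (sStar β ℓstar 0)) := by
        have := h1.sub (hdig 0)
        simpa [sStar] using this
      refine h3.congr fun x => ?_
      simp [lazyS, lazyDigit]
    | succ m ih =>
      have h3 : Tendsto (fun x => β (m + 1) * lazyS β x m - ((lazyDigit β x (m + 1) : ℤ) : ℝ)) L
          (nhds (sStar β ℓstar (m + 1))) := by
        have := (Tendsto.const_mul (β (m + 1)) ih).sub (hdig (m + 1))
        simpa [sStar] using this
      refine h3.congr fun x => ?_
      simp [lazyS, lazyDigit]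
  -- bounds on sStar
  have hbound : ∀ m, xB (shiftBase β (m + 1)) - 1 ≤ sStar β ℓstar m ∧
      sStar β ℓstar m ≤ xB (shiftBase β (m + 1)) := by
    intro m
    constructor
    · exact ge_of_tendsto (hts m) (Eventually.of_forall fun x => (lazyS_mem β x m).1.le)
    · exact le_of_tendsto (hts m) (Eventually.of_forall fun x => (lazyS_mem β x m).2)
  have hXn1 : 1 ≤ xB (shiftBase β n) := xB_ge_one β hβ hx n
  -- the limit point t
  obtain ⟨t, hge, hQle⟩ :
      ∃ t : ℝ, xB (shiftBase β n) - 1 ≤ t ∧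
        ∀ j, t * ∏ i ∈ Finset.range j, β (n + i) ≤ xB (shiftBase β (n + j)) := by
    rcases n with _ | p
    · refine ⟨xB β - 1, by rw [shift_zero β], ?_⟩
      have hE0 : ∀ j, (xB β - 1) * ∏ i ∈ Finset.range (j + 1), β (0 + i)
          = sStar β ℓstar j := by
        intro j
        induction j with
        | zero =>
          simp [sStar, hzero 0 (le_refl 0), Finset.prod_range_one, mul_comm]
        | succ j ih =>
          rw [Finset.prod_range_succ, ← mul_assoc, ih]
          simp [sStar, hzero (j + 1) (by omega)]
          ring
      intro j
      cases j with
      | zero => simp [shift_zero β]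
      | succ j =>
        rw [hE0 j]
        simpa using (hbound j).2
    · refine ⟨sStar β ℓstar p, (hbound p).1, ?_⟩
      have hE : ∀ j, sStar β ℓstar p * ∏ i ∈ Finset.range (j + 1), β (p + 1 + i)
          = sStar β ℓstar (p + 1 + j) := by
        intro j
        induction j with
        | zero =>
          simp [sStar, hzero (p + 1) (le_refl _), Finset.prod_range_one, mul_comm]
        | succ j ih =>
          rw [Finset.prod_range_succ, ← mul_assoc, ih]
          show sStar β ℓstar (p + 1 + j) * β (p + 1 + (j + 1)) = sStar β ℓstar (p + 1 + j + 1)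
          rw [show p + 1 + (j + 1) = p + 1 + j + 1 by omega]
          simp [sStar, hzero (p + 1 + j + 1) (by omega)]
          ring
      intro j
      cases j with
      | zero => simpa using (hbound p).2
      | succ j =>
        rw [hE j]
        exact (hbound (p + 1 + j)).2
  -- tail formula
  have hsum : Summable (fun k => ((⌈shiftBase β n k⌉ : ℝ) - 1) / prodUpTo (shiftBase β n) k) :=
    shift_summable β hβ hx n
  set C : ℕ → ℝ := fun k => ((⌈shiftBase β n k⌉ : ℝ) - 1) / prodUpTo (shiftBase β n) k with hCdef
  have htailF : ∀ j, xB (shiftBase β (n + j))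
      = (∏ i ∈ Finset.range j, β (n + i)) * (xB (shiftBase β n) - ∑ k ∈ Finset.range j, C k) := by
    intro j
    induction j with
    | zero => simp
    | succ j ih =>
      have hrec := xB_rec β hβ hx (n + j)
      have hPpos : 0 < prodUpTo (shiftBase β n) j := prodShift_pos β hβ n j
      have hCj : C j * prodUpTo (shiftBase β n) j = (⌈β (n + j)⌉ : ℝ) - 1 := by
        rw [hCdef]
        exact div_mul_cancel₀ _ (ne_of_gt hPpos)
      have hPj : prodUpTo (shiftBase β n) j = ∏ i ∈ Finset.range (j + 1), β (n + i) := rfl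
      have h4 : xB (shiftBase β (n + j + 1))
          = β (n + j) * xB (shiftBase β (n + j)) - ((⌈β (n + j)⌉ : ℝ) - 1) := by
        linarith [hrec]
      show xB (shiftBase β (n + j + 1)) = _
      rw [Finset.prod_range_succ, Finset.sum_range_succ, h4, ih, ← hCj, hPj,
        Finset.prod_range_succ]
      ring
  have hSle : ∀ j, t ≤ xB (shiftBase β n) - ∑ k ∈ Finset.range j, C k := by
    intro j
    have hQpos : 0 < ∏ i ∈ Finset.range j, β (n + i) := rangeProd_pos β hβ n j
    have h5 := hQle j
    rw [htailF j, mul_comm] at h5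
    exact le_of_mul_le_mul_left h5 hQpos
  have hS : Tendsto (fun j => ∑ k ∈ Finset.range j, C k) atTop (nhds (xB (shiftBase β n))) :=
    hsum.hasSum.tendsto_sum_nat
  have h0 : Tendsto (fun j => xB (shiftBase β n) - ∑ k ∈ Finset.range j, C k) atTop (nhds 0) := by
    have := (tendsto_const_nhds (x := xB (shiftBase β n)) (f := atTop)).sub hS
    simpa using this
  have ht0 : t ≤ 0 := ge_of_tendsto' h0 hSle
  linarith
end

section
/- Let β=(β_n)_{n∈ℕ} be a Cantor base with x_β<+∞. The infinite word ℓ*_β(x_β−1) is not ultimately maximal, i.e., there is no N∈ℕ such that for all n≥N the n-th letter of ℓ*_β(x_β−1) equals ⌈β_n⌉−1. -/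
open Filter Topology

private lemma prodUpTo_pos' {β : ℕ → ℝ} (hβ : ∀ n, 1 < β n) (n : ℕ) : 0 < prodUpTo β n :=
  Finset.prod_pos fun i _ => zero_lt_one.trans (hβ i)

private lemma lazyS_le' (β : ℕ → ℝ) (x : ℝ) (n : ℕ) : lazyS β x n ≤ xB (shiftBase β (n + 1)) := by
  cases n with
  | zero =>
      have := Int.le_ceil (β 0 * x - xB (shiftBase β 1))
      simp only [lazyS]; linarith
  | succ m =>
      have := Int.le_ceil (β (m + 1) * lazyS β x m - xB (shiftBase β (m + 2)))
      simp only [lazyS]; linarith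

private lemma lazyS_gt' (β : ℕ → ℝ) (x : ℝ) (n : ℕ) :
    xB (shiftBase β (n + 1)) - 1 < lazyS β x n := by
  cases n with
  | zero =>
      have := Int.ceil_lt_add_one (β 0 * x - xB (shiftBase β 1))
      simp only [lazyS]; linarith
  | succ m =>
      have := Int.ceil_lt_add_one (β (m + 1) * lazyS β x m - xB (shiftBase β (m + 2)))
      simp only [lazyS]; linarith

private lemma lazyS_eq' (β : ℕ → ℝ) (hβ : ∀ n, 1 < β n) (x : ℝ) (K : ℕ) :
    lazyS β x K = prodUpTo β K *
      (x - ∑ n ∈ Finset.range (K + 1), (lazyDigit β x n : ℝ) / prodUpTo β n) := by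
  induction K with
  | zero =>
      have h0 : prodUpTo β 0 = β 0 := by simp [prodUpTo]
      have hb : β 0 ≠ 0 := by have := hβ 0; linarith
      have hsum : ∑ n ∈ Finset.range (0 + 1), (lazyDigit β x n : ℝ) / prodUpTo β n
          = (lazyDigit β x 0 : ℝ) / β 0 := by rw [Finset.sum_range_one, h0]
      rw [hsum, h0, show lazyS β x 0 = β 0 * x - (lazyDigit β x 0 : ℝ) from rfl]
      field_simp
  | succ K ih =>
      have hp : prodUpTo β (K + 1) = prodUpTo β K * β (K + 1) := by
        simp [prodUpTo, Finset.prod_range_succ]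
      have hs : lazyS β x (K + 1) = β (K + 1) * lazyS β x K - (lazyDigit β x (K + 1) : ℝ) := rfl
      have hb : β (K + 1) ≠ 0 := by have := hβ (K + 1); linarith
      have hpk : prodUpTo β K ≠ 0 := (prodUpTo_pos' hβ K).ne'
      rw [hs, ih,
        Finset.sum_range_succ (fun n => (lazyDigit β x n : ℝ) / prodUpTo β n) (K + 1), hp]
      have hd : prodUpTo β K * β (K + 1) * ((lazyDigit β x (K + 1) : ℝ) / (prodUpTo β K * β (K + 1)))
          = (lazyDigit β x (K + 1) : ℝ) := by field_simp
      linear_combination hd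

private lemma xB_shift' {β : ℕ → ℝ} (hβ : ∀ n, 1 < β n) (hx : XBSummable β) (K : ℕ) :
    xB (shiftBase β (K + 1)) =
      prodUpTo β K * (xB β - ∑ n ∈ Finset.range (K + 1), ((⌈β n⌉ : ℝ) - 1) / prodUpTo β n) := by
  have hpk : (0:ℝ) < prodUpTo β K := prodUpTo_pos' hβ K
  have hprod : ∀ m, prodUpTo (shiftBase β (K + 1)) m = prodUpTo β (m + (K + 1)) / prodUpTo β K := by
    intro m
    have h : prodUpTo β (m + (K + 1)) = prodUpTo β K * prodUpTo (shiftBase β (K + 1)) m := by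
      unfold prodUpTo shiftBase
      rw [show m + (K + 1) + 1 = (K + 1) + (m + 1) by omega, Finset.prod_range_add]
    rw [h]; field_simp
  have hterm : ∀ m, ((⌈shiftBase β (K + 1) m⌉ : ℝ) - 1) / prodUpTo (shiftBase β (K + 1)) m
      = prodUpTo β K * (((⌈β (m + (K + 1))⌉ : ℝ) - 1) / prodUpTo β (m + (K + 1))) := by
    intro m
    have hsb : shiftBase β (K + 1) m = β (m + (K + 1)) := by
      unfold shiftBase; rw [show K + 1 + m = m + (K + 1) by omega]
    have hpm : prodUpTo β (m + (K + 1)) ≠ 0 := (prodUpTo_pos' hβ _).ne'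
    rw [hprod m, hsb]
    field_simp
  have hkey := Summable.sum_add_tsum_nat_add (K + 1) hx
  calc xB (shiftBase β (K + 1))
      = ∑' m, prodUpTo β K * (((⌈β (m + (K + 1))⌉ : ℝ) - 1) / prodUpTo β (m + (K + 1))) :=
        tsum_congr hterm
    _ = prodUpTo β K * ∑' m, ((⌈β (m + (K + 1))⌉ : ℝ) - 1) / prodUpTo β (m + (K + 1)) :=
        tsum_mul_left
    _ = _ := by
        rw [show (∑' m, ((⌈β (m + (K + 1))⌉ : ℝ) - 1) / prodUpTo β (m + (K + 1)))
          = xB β - ∑ n ∈ Finset.range (K + 1), ((⌈β n⌉ : ℝ) - 1) / prodUpTo β n from by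
            rw [xB]; linarith]
/-- the quasi-lazy expansion `ℓ*_β(x_β−1)` is not ultimately maximal. -/
theorem quasiLazy_not_ultimately_maximal (β : ℕ → ℝ) (hβ : IsCantorBase β) (hx : XBSummable β)
    (ℓstar : ℕ → ℤ)
    (hl : Tendsto (lazyDigit β) (nhdsWithin (xB β - 1) (Set.Ioi (xB β - 1))) (nhds ℓstar)) :
    ¬ ∃ N : ℕ, ∀ n, N ≤ n → ℓstar n = ⌈β n⌉ - 1 := by
  rintro ⟨N, hN⟩
  have hb := hβ.one_lt
  have hpos : ∀ n, 0 < prodUpTo β n := prodUpTo_pos' hb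
  set c : ℝ := xB β - 1 with hc
  set F := nhdsWithin c (Set.Ioi c) with hF
  haveI : F.NeBot := by rw [hF]; exact nhdsGT_neBot c
  -- coordinatewise convergence of digits
  have hcoord : ∀ n, ∀ᶠ x in F, lazyDigit β x n = ℓstar n := by
    intro n
    have h1 : Tendsto (fun x => lazyDigit β x n) F (nhds (ℓstar n)) :=
      tendsto_pi_nhds.mp hl n
    have h2 : nhds (ℓstar n) = pure (ℓstar n) := congrFun (nhds_discrete ℤ) _
    rw [h2] at h1
    exact tendsto_pure.mp h1
  have hmatch : ∀ K, ∀ᶠ x in F, ∀ n, n ≤ K → lazyDigit β x n = ℓstar n := by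
    intro K
    induction K with
    | zero =>
        filter_upwards [hcoord 0] with x h0 n hn
        have : n = 0 := Nat.le_zero.mp hn
        rw [this]; exact h0
    | succ m ih =>
        filter_upwards [ih, hcoord (m + 1)] with x h1 h2 n hn
        rcases Nat.lt_succ_iff_lt_or_eq.mp (Nat.lt_succ_of_le hn) with h | h
        · exact h1 n (Nat.lt_succ_iff.mp h)
        · rw [h]; exact h2
  -- existence of points of (c, c+ε) with prescribed digits
  have hexists : ∀ K : ℕ, ∀ ε : ℝ, 0 < ε →
      ∃ x : ℝ, c < x ∧ x < c + ε ∧ ∀ n, n ≤ K → lazyDigit β x n = ℓstar n := by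
    intro K ε hε
    have h1 : ∀ᶠ x in F, x ∈ Set.Ioi c := eventually_mem_nhdsWithin
    have h2 : ∀ᶠ x in F, x < c + ε :=
      Filter.Eventually.filter_mono nhdsWithin_le_nhds
        (eventually_lt_nhds (by linarith : c < c + ε))
    obtain ⟨x, hx1, hx2, hx3⟩ := (h1.and (h2.and (hmatch K))).exists
    exact ⟨x, hx1, hx2, hx3⟩
  -- abbreviations
  set A : ℕ → ℝ := fun K => ∑ n ∈ Finset.range (K + 1), ((⌈β n⌉ : ℝ) - 1) / prodUpTo β n
    with hA
  set S : ℕ → ℝ := fun K => ∑ n ∈ Finset.range (K + 1), (ℓstar n : ℝ) / prodUpTo β n with hS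
  have hshift : ∀ K, xB (shiftBase β (K + 1)) = prodUpTo β K * (xB β - A K) :=
    fun K => xB_shift' hb hx K
  -- the crucial sum identity for K ≥ N
  have hsplit : ∀ K, N ≤ K → S K - S N = A K - A N := by
    intro K hK
    have h1 : ∀ T : ℕ → ℝ, ∑ n ∈ Finset.range (K + 1), T n
        = ∑ n ∈ Finset.range (N + 1), T n + ∑ n ∈ Finset.Ico (N + 1) (K + 1), T n := by
      intro T
      rw [Finset.range_eq_Ico,
        ← Finset.sum_Ico_consecutive T (Nat.zero_le (N + 1)) (by omega : N + 1 ≤ K + 1),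
        ← Finset.range_eq_Ico]
    have h2 : ∑ n ∈ Finset.Ico (N + 1) (K + 1), (ℓstar n : ℝ) / prodUpTo β n
        = ∑ n ∈ Finset.Ico (N + 1) (K + 1), ((⌈β n⌉ : ℝ) - 1) / prodUpTo β n := by
      apply Finset.sum_congr rfl
      intro n hn
      have hn' : N ≤ n := by have := (Finset.mem_Ico.mp hn).1; omega
      rw [hN n hn']
      push_cast
      ring
    simp only [hS, hA, h1 (fun n => (ℓstar n : ℝ) / prodUpTo β n),
      h1 (fun n => ((⌈β n⌉ : ℝ) - 1) / prodUpTo β n), h2]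
    ring
  -- lower bound: A N - 1 - S N ≥ -1/prodUpTo β K for every K ≥ N
  have hlow : ∀ K, N ≤ K → -(1 / prodUpTo β K) ≤ A N - 1 - S N := by
    intro K hK
    apply le_of_forall_pos_le_add
    intro ε hε
    obtain ⟨x, hx1, hx2, hx3⟩ := hexists K ε hε
    have hse : lazyS β x K = prodUpTo β K * (x - S K) := by
      rw [lazyS_eq' β hb x K]
      congr 1
      congr 1
      exact Finset.sum_congr rfl fun n hn => by
        rw [hx3 n (Nat.lt_succ_iff.mp (Finset.mem_range.mp hn))]
    have hgt : xB (shiftBase β (K + 1)) - 1 < lazyS β x K := lazyS_gt' β x K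
    rw [hse, hshift K] at hgt
    -- prodUpTo β K * (xB β - A K) - 1 < prodUpTo β K * (x - S K)
    have hKpos := hpos K
    have h3 : xB β - A K < x - S K + 1 / prodUpTo β K := by
      rw [← mul_lt_mul_iff_right₀ hKpos]
      have heq : prodUpTo β K * (x - S K + 1 / prodUpTo β K)
          = prodUpTo β K * (x - S K) + 1 := by field_simp
      rw [heq]
      linarith
    have h4 : S K = S N + (A K - A N) := by have := hsplit K hK; linarith
    have hxc : x < c + ε := hx2
    rw [h4] at h3
    simp only [hc] at hxc
    linarith
  -- pass to the limit K → ∞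
  have htendprod : Tendsto (fun K => prodUpTo β K) atTop atTop := by
    have : (fun K => prodUpTo β K) = (fun M => ∏ i ∈ Finset.range M, β i) ∘ (fun K => K + 1) :=
      rfl
    rw [this]
    exact hβ.prod_tendsto.comp (tendsto_add_atTop_nat 1)
  have htend0 : Tendsto (fun K => -(1 / prodUpTo β K)) atTop (nhds 0) := by
    have h := htendprod.inv_tendsto_atTop
    have h2 := h.neg
    simp only [neg_zero] at h2
    simpa [one_div] using h2
  have hkey : (0:ℝ) ≤ A N - 1 - S N := by
    have := le_of_tendsto htend0 (eventually_atTop.mpr ⟨N, hlow⟩)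
    linarith [this]
  -- final contradiction at level N
  obtain ⟨x, hx1, _, hx3⟩ := hexists N 1 one_pos
  have hse : lazyS β x N = prodUpTo β N * (x - S N) := by
    rw [lazyS_eq' β hb x N]
    congr 1
    congr 1
    exact Finset.sum_congr rfl fun n hn => by
      rw [hx3 n (Nat.lt_succ_iff.mp (Finset.mem_range.mp hn))]
  have hle : lazyS β x N ≤ xB (shiftBase β (N + 1)) := lazyS_le' β x N
  rw [hse, hshift N] at hle
  have hNpos := hpos N
  have h5 : x - S N ≤ xB β - A N := le_of_mul_le_mul_left (by linarith [hle]) hNpos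
  have : x ≤ c := by simp only [hc]; linarith
  exact absurd hx1 (not_lt.mpr this)
end
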